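/- Let K be a finite simplicial complex with an acyclic partial matching μ : M → M. Then for every q ≥ 0, H_q(K) is isomorphic to H_q(Crit_*(K, μ)), where Crit_*(K, μ) is the chain complex spanned in each degree q by {φ_q(γ) : γ ∈ R_q(μ)} with boundary operator the restriction of ∂. -/

import Mathlib

set_option maxSynthPendingDepth 2

/-! Simplicial ℤ/2 chains and homology machinery. -/

/-- Chains with `ℤ/2` coefficients, formal sums of finite subsets of `V`. -/
abbrev Ch (V : Type*) := Finset V →₀ ZMod 2

/-- The simplicial boundary operator: a simplex with at least two vertices is sent
to the sum of its codimension-1 faces; vertices are sent to `0`. -/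
noncomputable def bdry (V : Type*) [DecidableEq V] : Ch V →ₗ[ZMod 2] Ch V :=
  Finsupp.linearCombination (ZMod 2) fun σ : Finset V =>
    if σ.card ≤ 1 then 0 else ∑ v ∈ σ, Finsupp.single (σ.erase v) (1 : ZMod 2)

/-- A simplicial complex: a collection of nonempty finite subsets of `V`
closed under taking nonempty subsets. -/
def IsComplex {V : Type*} (K : Set (Finset V)) : Prop :=
  ∀ σ ∈ K, σ.Nonempty ∧ ∀ τ ⊆ σ, τ.Nonempty → τ ∈ K

/-- The space of chains supported on simplices of `K` with `k` vertices
(i.e. the simplicial chain group of degree `k - 1`). -/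
noncomputable def chainCard {V : Type*} [DecidableEq V] (K : Set (Finset V)) (k : ℕ) :
    Submodule (ZMod 2) (Ch V) :=
  Submodule.span (ZMod 2) {f | ∃ σ ∈ K, σ.card = k ∧ f = Finsupp.single σ 1}

theorem chainCard_mono {V : Type*} [DecidableEq V] {K₁ K₂ : Set (Finset V)}
    (h : K₁ ⊆ K₂) (k : ℕ) : chainCard K₁ k ≤ chainCard K₂ k := by
  apply Submodule.span_mono
  rintro f ⟨σ, hσ, hc, rfl⟩
  exact ⟨σ, h hσ, hc, rfl⟩

/-- Cycles (in cardinality grading `k`, i.e. degree `k-1`) of a chain subcomplex `W`. -/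
noncomputable def cyclesOf {V : Type*} [DecidableEq V] (W : ℕ → Submodule (ZMod 2) (Ch V)) (k : ℕ) :
    Submodule (ZMod 2) (Ch V) :=
  W k ⊓ LinearMap.ker (bdry V)

/-- Boundaries (in cardinality grading `k`, i.e. degree `k-1`) of a chain subcomplex `W`. -/
noncomputable def bdriesOf {V : Type*} [DecidableEq V] (W : ℕ → Submodule (ZMod 2) (Ch V)) (k : ℕ) :
    Submodule (ZMod 2) (Ch V) :=
  Submodule.map (bdry V) (W (k + 1))

/-- Homology of the chain complex `W` in cardinality grading `k` (degree `k - 1`):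
cycles modulo boundaries. -/
abbrev homolOf {V : Type*} [DecidableEq V] (W : ℕ → Submodule (ZMod 2) (Ch V)) (k : ℕ) :=
  ↥(cyclesOf W k) ⧸ (bdriesOf W k).comap (cyclesOf W k).subtype

/-- The map on homology induced by a degreewise inclusion of chain complexes. -/
noncomputable def homolMap {V : Type*} [DecidableEq V]
    (W W' : ℕ → Submodule (ZMod 2) (Ch V)) (h : ∀ k, W k ≤ W' k) (k : ℕ) :
    homolOf W k →ₗ[ZMod 2] homolOf W' k :=
  Submodule.mapQ _ _ (Submodule.inclusion (inf_le_inf (h k) le_rfl))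
    (by
      intro x hx
      simp only [Submodule.mem_comap, Submodule.subtype_apply, Submodule.coe_inclusion]
        at hx ⊢
      exact Submodule.map_mono (h (k + 1)) hx)

/-! Discrete Morse theory: partial matchings, acyclicity, the closure map. -/

/-- `Covers σ τ`: `σ` covers `τ` in the face poset, i.e. `τ ⊆ σ` in codimension one. -/
def Covers {V : Type*} (σ τ : Finset V) : Prop :=
  τ ⊆ σ ∧ σ.card = τ.card + 1

/-- A partial matching: an involution `μ` on a set `M` of simplices matching each
simplex with a simplex that covers it or that it covers. -/
structure PartialMatching (V : Type*) where
  M : Set (Finset V)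
  μ : Finset V → Finset V
  mem_M : ∀ σ ∈ M, μ σ ∈ M
  invol : ∀ σ ∈ M, μ (μ σ) = σ
  matched : ∀ σ ∈ M, Covers (μ σ) σ ∨ Covers σ (μ σ)

/-- Acyclicity of a partial matching: there is no cyclic sequence
`σ₁ ≻ μ(σ₁) ≺ σ₂ ≻ μ(σ₂) ≺ ⋯ ≺ σ_l ≻ μ(σ_l) ≺ σ₁` with `l ≥ 2` and the `σᵢ` distinct. -/
def PartialMatching.Acyclic {V : Type*} (m : PartialMatching V) : Prop :=
  ¬ ∃ (l : ℕ) (f : ℕ → Finset V), 2 ≤ l ∧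
      (∀ i < l, ∀ j < l, f i = f j → i = j) ∧
      (∀ i < l, f i ∈ m.M ∧ Covers (f i) (m.μ (f i))) ∧
      (∀ i < l, Covers (f ((i + 1) % l)) (m.μ (f i)))

/-- `M^↑`: matched simplices lying above their partner. -/
def Mup {V : Type*} (m : PartialMatching V) : Set (Finset V) :=
  {σ | σ ∈ m.M ∧ Covers σ (m.μ σ)}

/-- `M_q^↑` in cardinality grading: elements of `M^↑` with `k` vertices (degree `k-1`). -/
def MupCard {V : Type*} (m : PartialMatching V) (k : ℕ) : Set (Finset V) :=
  {σ | σ ∈ Mup m ∧ σ.card = k}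

/-- `R_q(μ)` in cardinality grading: the unmatched (critical) simplices of `K`
with `k` vertices (degree `k-1`). -/
def Rcard {V : Type*} (K : Set (Finset V)) (m : PartialMatching V) (k : ℕ) :
    Set (Finset V) :=
  {σ | σ ∈ K ∧ σ.card = k ∧ σ ∉ m.M}

/-- `(α, β)` is an edge of the graph `G(μ)`: `μ β` is defined, `β` lies above its
partner, and `α` covers `μ β` (with `β ≠ α`). -/
def IsEdge {V : Type*} (m : PartialMatching V) (α β : Finset V) : Prop :=
  β ≠ α ∧ β ∈ m.M ∧ Covers β (m.μ β) ∧ Covers α (m.μ β)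

open scoped Classical in
/-- `φ` is the closure map of the matching `m` on `K`: it satisfies the defining
recursion `φ α = α + ∑ φ β` over the edges `(α, β)` emanating from `α` in `G(μ)`. -/
def IsClosure {V : Type*} [Fintype V] [DecidableEq V] (K : Set (Finset V))
    (m : PartialMatching V) (φ : Finset V → Ch V) : Prop :=
  ∀ α ∈ K, φ α = Finsupp.single α 1 + ∑ β : Finset V, if IsEdge m α β then φ β else 0

/-- The degree-`(k-1)` chain group of the Morse (critical) complex of `C`:
the span of the closures of the unmatched simplices of `C` with `k` vertices. -/
noncomputable def critWOn {V : Type*} [DecidableEq V] (C : Set (Finset V))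
    (m : PartialMatching V) (φ : Finset V → Ch V) (k : ℕ) :
    Submodule (ZMod 2) (Ch V) :=
  Submodule.span (ZMod 2) {f | ∃ γ, γ ∈ C ∧ γ.card = k ∧ γ ∉ m.M ∧ f = φ γ}

theorem critWOn_mono {V : Type*} [DecidableEq V] {C₁ C₂ : Set (Finset V)}
    (h : C₁ ⊆ C₂) (m : PartialMatching V) (φ : Finset V → Ch V) (k : ℕ) :
    critWOn C₁ m φ k ≤ critWOn C₂ m φ k := by
  apply Submodule.span_mono
  rintro f ⟨γ, hγ, hc, hm, rfl⟩
  exact ⟨γ, h hγ, hc, hm, rfl⟩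

/-- The degree-`(k-1)` chain group of the complex `Match`, spanned by `M_{k-1}^↑`
together with the boundaries of the elements of `M_k^↑`. -/
noncomputable def matchW {V : Type*} [DecidableEq V] (m : PartialMatching V) (k : ℕ) :
    Submodule (ZMod 2) (Ch V) :=
  Submodule.span (ZMod 2)
    ({f | ∃ σ ∈ MupCard m k, f = Finsupp.single σ 1} ∪
      {f | ∃ β ∈ MupCard m (k + 1), f = bdry V (Finsupp.single β 1)})

/-- The set `B_q^R ∪ B_q^↑ ∪ B_q^↓` (in cardinality grading `k = q + 1`). -/
noncomputable def morseBasis {V : Type*} [DecidableEq V] (K : Set (Finset V))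
    (m : PartialMatching V) (φ : Finset V → Ch V) (k : ℕ) : Set (Ch V) :=
  {f | ∃ γ ∈ Rcard K m k, f = φ γ} ∪
    ({f | ∃ σ ∈ MupCard m k, f = Finsupp.single σ 1} ∪
      {f | ∃ β ∈ MupCard m (k + 1), f = bdry V (Finsupp.single β 1)})

open Finsupp Relation
set_option linter.unusedSectionVars false

section DMT
variable {V : Type*} [DecidableEq V]

lemma bdry_single (σ : Finset V) :
    bdry V (Finsupp.single σ 1) =
      if σ.card ≤ 1 then 0 else ∑ v ∈ σ, Finsupp.single (σ.erase v) (1 : ZMod 2) := by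
  simp [bdry, Finsupp.linearCombination_single]

lemma ch_add_self (x : Ch V) : x + x = 0 := by
  rw [← two_smul (ZMod 2) x, show ((2:ZMod 2)) = 0 from rfl, zero_smul]

lemma bdry_single_apply {σ τ : Finset V} (hτ : τ.Nonempty) (hc : σ.card = τ.card + 1) :
    (bdry V (Finsupp.single σ 1)) τ = if τ ⊆ σ then 1 else 0 := by
  have hτc : 1 ≤ τ.card := Finset.card_pos.2 hτ
  rw [bdry_single, if_neg (by omega)]
  rw [Finsupp.finset_sum_apply]
  have : ∀ v ∈ σ, (Finsupp.single (σ.erase v) (1 : ZMod 2)) τ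
      = if σ.erase v = τ then 1 else 0 := fun v _ => Finsupp.single_apply
  rw [Finset.sum_congr rfl this, Finset.sum_boole]
  by_cases hsub : τ ⊆ σ
  · rw [if_pos hsub]
    have hfil : σ.filter (fun v => σ.erase v = τ) = σ \ τ := by
      ext v
      simp only [Finset.mem_filter, Finset.mem_sdiff]
      constructor
      · rintro ⟨hv, he⟩
        exact ⟨hv, fun hvτ => (Finset.notMem_erase v σ) (he ▸ hvτ)⟩
      · rintro ⟨hv, hvτ⟩
        refine ⟨hv, ?_⟩
        have hsub2 : τ ⊆ σ.erase v := fun w hw =>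
          Finset.mem_erase.2 ⟨fun h => hvτ (h ▸ hw), hsub hw⟩
        have hcard : (σ.erase v).card = τ.card := by
          rw [Finset.card_erase_of_mem hv]; omega
        exact (Finset.eq_of_subset_of_card_le hsub2 (le_of_eq hcard)).symm
    rw [hfil, Finset.card_sdiff_of_subset hsub]
    have : σ.card - τ.card = 1 := by omega
    rw [this]; norm_num
  · rw [if_neg hsub]
    have hfil : σ.filter (fun v => σ.erase v = τ) = ∅ := by
      apply Finset.filter_eq_empty_iff.2
      intro v _ he
      exact hsub (he ▸ Finset.erase_subset v σ)
    rw [hfil]; simp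

lemma bdry_bdry_single (σ : Finset V) :
    bdry V (bdry V (Finsupp.single σ (1 : ZMod 2))) = 0 := by
  rw [bdry_single]
  split
  · simp
  · rename_i h
    push_neg at h
    rw [map_sum]
    by_cases h2 : σ.card = 2
    · apply Finset.sum_eq_zero
      intro v hv
      rw [bdry_single, if_pos (by rw [Finset.card_erase_of_mem hv]; omega)]
    · have h3 : 3 ≤ σ.card := by omega
      have : ∀ v ∈ σ, bdry V (Finsupp.single (σ.erase v) (1 : ZMod 2))
          = ∑ w ∈ σ.erase v, Finsupp.single ((σ.erase v).erase w) (1 : ZMod 2) := by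
        intro v hv
        rw [bdry_single, if_neg (by rw [Finset.card_erase_of_mem hv]; omega)]
      rw [Finset.sum_congr rfl this, Finset.sum_sigma']
      apply Finset.sum_involution (fun p _ => (⟨p.2, p.1⟩ : (_ : V) × V))
      · intro p hp
        rw [Finset.mem_sigma] at hp
        have hne : p.1 ≠ p.2 := (Finset.ne_of_mem_erase hp.2).symm
        have : (σ.erase p.2).erase p.1 = (σ.erase p.1).erase p.2 :=
          Finset.erase_right_comm
        rw [this]
        exact ch_add_self _
      · intro p hp _
        rw [Finset.mem_sigma] at hp
        intro hcontra
        exact (Finset.ne_of_mem_erase hp.2) (congrArg Sigma.fst hcontra)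
      · intro p hp
        rw [Finset.mem_sigma] at hp ⊢
        have h1 : p.2 ∈ σ := Finset.mem_of_mem_erase hp.2
        have hne : p.2 ≠ p.1 := Finset.ne_of_mem_erase hp.2
        exact ⟨h1, Finset.mem_erase.2 ⟨fun h => hne h.symm, hp.1⟩⟩
      · intro p hp
        rfl

lemma bdry_bdry (f : Ch V) : bdry V (bdry V f) = 0 := by
  have : (bdry V).comp (bdry V) = 0 := by
    apply Finsupp.lhom_ext'
    intro σ
    apply LinearMap.ext_ring
    simp only [LinearMap.comp_apply, LinearMap.zero_comp, LinearMap.zero_apply,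
      Finsupp.lsingle_apply]
    exact bdry_bdry_single σ
  exact LinearMap.congr_fun this f

end DMT
/-! ### Acyclicity machinery -/

lemma transGen_exists_walk {X : Type*} {q : X → X → Prop} {a b : X}
    (h : Relation.TransGen q a b) :
    ∃ (n : ℕ) (w : ℕ → X), 1 ≤ n ∧ w 0 = a ∧ w n = b ∧ ∀ i < n, q (w i) (w (i + 1)) := by
  induction h with
  | @single c h =>
    refine ⟨1, fun i => if i = 0 then a else c, le_refl 1, by simp, by simp, ?_⟩
    intro i hi
    have : i = 0 := by omega
    subst this
    simpa using h
  | @tail b c hab hbc ih =>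
    obtain ⟨n, w, hn, h0, hnb, hstep⟩ := ih
    refine ⟨n + 1, fun i => if i ≤ n then w i else c, by omega, by simpa, by simp, ?_⟩
    intro i hi
    by_cases hin : i < n
    · simp only [if_pos (by omega : i ≤ n), if_pos (by omega : i + 1 ≤ n)]
      exact hstep i hin
    · have hieq : i = n := by omega
      simp only [if_pos (le_of_eq hieq), if_neg (by omega : ¬ i + 1 ≤ n)]
      rw [hieq, hnb]
      exact hbc

lemma closed_walk_false {X : Type*} {q : X → X → Prop}
    (hq : ∀ n (w : ℕ → X), 1 ≤ n → (∀ i < n, ∀ j < n, w i = w j → i = j) →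
          (∀ i < n, q (w i) (w ((i + 1) % n))) → False) :
    ∀ n, ∀ w : ℕ → X, 1 ≤ n → w 0 = w n → (∀ i < n, q (w i) (w (i + 1))) → False := by
  intro n
  induction n using Nat.strong_induction_on with
  | _ n ih =>
    intro w hn hclosed hstep
    by_cases hinj : ∀ i < n, ∀ j < n, w i = w j → i = j
    · apply hq n w hn hinj
      intro i hi
      rcases Nat.lt_or_ge (i + 1) n with h | h
      · rw [Nat.mod_eq_of_lt h]; exact hstep i hi
      · have hieq : i + 1 = n := by omega
        rw [hieq, Nat.mod_self]
        have := hstep i hi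
        rw [hieq, ← hclosed] at this
        exact this
    · push_neg at hinj
      obtain ⟨i, hi, j, hj, heq, hne⟩ := hinj
      set i' := min i j with hi'
      set j' := max i j with hj'
      have hij : i' < j' := by omega
      have hjn : j' < n := by omega
      have heq' : w i' = w j' := by
        rcases le_total i j with h | h
        · rw [hi', hj', min_eq_left h, max_eq_right h]; exact heq
        · rw [hi', hj', min_eq_right h, max_eq_left h]; exact heq.symm
      apply ih (j' - i') (by omega) (fun t => w (i' + t)) (by omega)
      · simp only [Nat.add_zero, Nat.add_sub_cancel' (le_of_lt hij)]
        exact heq'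
      · intro t ht
        have : i' + t < n := by omega
        have h2 : i' + t + 1 = i' + (t + 1) := by omega
        rw [← h2]
        exact hstep _ this

/-- The "child" relation: `rel m β α` iff `(α, β)` is an edge of `G(μ)`. -/
def rel {V : Type*} (m : PartialMatching V) : Finset V → Finset V → Prop :=
  fun β α => IsEdge m α β

lemma rel_no_cycle {V : Type*} [DecidableEq V] {m : PartialMatching V} (hac : m.Acyclic)
    (α : Finset V) : ¬ Relation.TransGen (rel m) α α := by
  intro h
  obtain ⟨n, w, hn, h0, hnb, hstep⟩ := transGen_exists_walk h
  refine closed_walk_false ?_ n w hn (h0.trans hnb.symm) hstep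
  intro n w hn hinj hsteps
  rcases Nat.lt_or_ge n 2 with h2 | h2
  · have hn1 : n = 1 := by omega
    subst hn1
    have := hsteps 0 (by omega)
    simp only [Nat.mod_self] at this
    exact this.1 rfl
  · exact hac ⟨n, w, h2, hinj,
      fun i hi => ⟨(hsteps i hi).2.1, (hsteps i hi).2.2.1⟩,
      fun i hi => (hsteps i hi).2.2.2⟩

lemma wf_rel {V : Type*} [Fintype V] [DecidableEq V] {m : PartialMatching V}
    (hac : m.Acyclic) : WellFounded (rel m) := by
  haveI : IsIrrefl (Finset V) (Relation.TransGen (rel m)) := ⟨rel_no_cycle hac⟩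
  exact Subrelation.wf (fun h => Relation.TransGen.single h)
    (Finite.wellFounded_of_trans_of_irrefl _)

/-- Existence of maximal elements in finite sets, w.r.t. the reachability order. -/
lemma exists_maximal {V : Type*} [Fintype V] [DecidableEq V] {m : PartialMatching V}
    (hac : m.Acyclic) {T : Finset (Finset V)} (hT : T.Nonempty) :
    ∃ σ₀ ∈ T, ∀ σ ∈ T, ¬ Relation.TransGen (rel m) σ₀ σ := by
  haveI : IsIrrefl (Finset V) (Function.swap (Relation.TransGen (rel m))) :=
    ⟨fun a h => rel_no_cycle hac a h⟩
  haveI : IsTrans (Finset V) (Function.swap (Relation.TransGen (rel m))) :=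
    ⟨fun a b c hab hbc => Relation.TransGen.trans hbc hab⟩
  have hwf : WellFounded (Function.swap (Relation.TransGen (rel m))) :=
    Finite.wellFounded_of_trans_of_irrefl _
  obtain ⟨σ₀, hσ₀, hmin⟩ := hwf.has_min ↑T (by exact_mod_cast hT)
  exact ⟨σ₀, hσ₀, fun σ hσ h => hmin σ hσ h⟩

lemma card_eq_of_rel {V : Type*} {m : PartialMatching V} {α β : Finset V}
    (h : rel m β α) : β.card = α.card := by
  obtain ⟨-, -, h1, h2⟩ := h
  have := h1.2
  have := h2.2
  omega

lemma card_eq_of_transGen {V : Type*} {m : PartialMatching V} {α β : Finset V}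
    (h : Relation.TransGen (rel m) β α) : β.card = α.card := by
  induction h with
  | single h => exact card_eq_of_rel h
  | tail _ h ih => exact ih.trans (card_eq_of_rel h)
/-! ### Support properties of the closure map -/

lemma span_single_eq {V : Type*} [DecidableEq V] (S : Set (Finset V)) :
    Submodule.span (ZMod 2) {f : Ch V | ∃ σ ∈ S, f = Finsupp.single σ 1} =
      Finsupp.supported (ZMod 2) (ZMod 2) S := by
  rw [Finsupp.supported_eq_span_single]
  congr 1
  ext f
  constructor
  · rintro ⟨σ, hσ, rfl⟩; exact ⟨σ, hσ, rfl⟩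
  · rintro ⟨σ, hσ, rfl⟩; exact ⟨σ, hσ, rfl⟩

lemma chainCard_eq_supported {V : Type*} [DecidableEq V] (K : Set (Finset V)) (k : ℕ) :
    chainCard K k = Finsupp.supported (ZMod 2) (ZMod 2) {σ | σ ∈ K ∧ σ.card = k} := by
  rw [chainCard, ← span_single_eq]
  congr 1
  ext f
  constructor
  · rintro ⟨σ, hσ, hc, rfl⟩; exact ⟨σ, ⟨hσ, hc⟩, rfl⟩
  · rintro ⟨σ, ⟨hσ, hc⟩, rfl⟩; exact ⟨σ, hσ, hc, rfl⟩

lemma mem_chainCard_iff {V : Type*} [DecidableEq V] {K : Set (Finset V)} {k : ℕ} {f : Ch V} :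
    f ∈ chainCard K k ↔ ∀ σ, f σ ≠ 0 → σ ∈ K ∧ σ.card = k := by
  rw [chainCard_eq_supported, Finsupp.mem_supported]
  constructor
  · intro h σ hσ
    exact h (Finsupp.mem_support_iff.2 hσ)
  · intro h σ hσ
    exact h σ (Finsupp.mem_support_iff.1 hσ)

section Phi
variable {V : Type*} [Fintype V] [DecidableEq V] {K : Set (Finset V)}
  {m : PartialMatching V} {φ : Finset V → Ch V}

lemma not_mup_of_mdown {τ : Finset V} (hM : τ ∈ m.M) (hcov : Covers (m.μ τ) τ) :
    τ ∉ Mup m := by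
  rintro ⟨-, hcov'⟩
  have h1 := hcov.2
  have h2 := hcov'.2
  omega

lemma phi_supp (hac : m.Acyclic) (hMK : m.M ⊆ K) (hφ : IsClosure K m φ) :
    ∀ α, α ∈ K → ∀ δ, φ α δ ≠ 0 →
      δ = α ∨ (δ ∈ Mup m ∧ Relation.TransGen (rel m) δ α) := by
  intro α
  refine (wf_rel hac).induction
    (C := fun α => α ∈ K → ∀ δ, φ α δ ≠ 0 →
      δ = α ∨ (δ ∈ Mup m ∧ Relation.TransGen (rel m) δ α)) α ?_
  intro x ih hxK δ hδ
  by_cases hδx : δ = x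
  · exact Or.inl hδx
  · right
    rw [hφ x hxK] at hδ
    rw [Finsupp.add_apply, Finsupp.finset_sum_apply] at hδ
    rw [Finsupp.single_apply, if_neg (fun h => hδx h.symm), zero_add] at hδ
    obtain ⟨β, -, hβ⟩ := Finset.exists_ne_zero_of_sum_ne_zero hδ
    have hedge : IsEdge m x β := by
      by_contra hc
      rw [if_neg hc] at hβ
      exact hβ rfl
    rw [if_pos hedge] at hβ
    have hβK : β ∈ K := hMK hedge.2.1
    rcases ih β hedge hβK δ hβ with h | ⟨h1, h2⟩
    · subst h
      exact ⟨⟨hedge.2.1, hedge.2.2.1⟩, Relation.TransGen.single hedge⟩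
    · exact ⟨h1, h2.tail hedge⟩

lemma phi_self (hac : m.Acyclic) (hMK : m.M ⊆ K) (hφ : IsClosure K m φ)
    {α : Finset V} (hα : α ∈ K) : φ α α = 1 := by
  classical
  rw [hφ α hα, Finsupp.add_apply, Finsupp.finset_sum_apply, Finsupp.single_apply, if_pos rfl]
  have : ∀ β ∈ Finset.univ, (if IsEdge m α β then φ β else 0) α = 0 := by
    intro β _
    by_cases hedge : IsEdge m α β
    · rw [if_pos hedge]
      by_contra hc
      have hβK : β ∈ K := hMK hedge.2.1
      rcases phi_supp hac hMK hφ β hβK α hc with h | ⟨-, h2⟩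
      · exact hedge.1 (h ▸ rfl)
      · exact rel_no_cycle hac α (h2.tail hedge)
    · rw [if_neg hedge, Finsupp.zero_apply]
  rw [Finset.sum_congr rfl this, Finset.sum_const_zero, add_zero]

lemma phi_card (hac : m.Acyclic) (hMK : m.M ⊆ K) (hφ : IsClosure K m φ)
    {α δ : Finset V} (hα : α ∈ K) (hδ : φ α δ ≠ 0) : δ ∈ K ∧ δ.card = α.card := by
  rcases phi_supp hac hMK hφ α hα δ hδ with h | ⟨⟨h1, -⟩, h2⟩
  · exact ⟨h ▸ hα, h ▸ rfl⟩
  · exact ⟨hMK h1, card_eq_of_transGen h2⟩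

lemma phi_mem_chainCard (hac : m.Acyclic) (hMK : m.M ⊆ K) (hφ : IsClosure K m φ)
    {α : Finset V} {k : ℕ} (hα : α ∈ K) (hc : α.card = k) : φ α ∈ chainCard K k := by
  rw [mem_chainCard_iff]
  intro σ hσ
  obtain ⟨h1, h2⟩ := phi_card hac hMK hφ hα hσ
  exact ⟨h1, h2.trans hc⟩

/-- Coefficient of `φ α` at an unmatched simplex `δ ≠ α` is zero. -/
lemma phi_apply_of_not_mup (hac : m.Acyclic) (hMK : m.M ⊆ K) (hφ : IsClosure K m φ)
    {α δ : Finset V} (hα : α ∈ K) (hδ : δ ∉ Mup m) (hne : δ ≠ α) : φ α δ = 0 := by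
  by_contra hc
  rcases phi_supp hac hMK hφ α hα δ hc with h | ⟨h1, -⟩
  · exact hne h
  · exact hδ h1

end Phi
section ClaimA
variable {V : Type*} [Fintype V] [DecidableEq V] {K : Set (Finset V)}
  {m : PartialMatching V} {φ : Finset V → Ch V}

/-- **Claim A**: the coefficient of `∂ φ α` at a down-matched simplex `τ` of
codimension one is `1` exactly when `α` is the partner of `τ`. -/
lemma claimA (hK : IsComplex K) (hac : m.Acyclic) (hMK : m.M ⊆ K) (hφ : IsClosure K m φ) :
    ∀ α, α ∈ K → ∀ τ, τ ∈ m.M → Covers (m.μ τ) τ → τ.card + 1 = α.card →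
      (bdry V (φ α)) τ = if m.μ τ = α then 1 else 0 := by
  intro α
  refine (wf_rel hac).induction
    (C := fun α => α ∈ K → ∀ τ, τ ∈ m.M → Covers (m.μ τ) τ → τ.card + 1 = α.card →
      (bdry V (φ α)) τ = if m.μ τ = α then 1 else 0) α ?_
  intro x ih hxK τ hτM hτcov hcard
  classical
  have hτne : τ.Nonempty := (hK τ (hMK hτM)).1
  rw [hφ x hxK, map_add, map_sum, Finsupp.add_apply, Finsupp.finset_sum_apply,
    bdry_single_apply hτne hcard.symm]
  have hterm : ∀ β ∈ Finset.univ,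
      (bdry V (if IsEdge m x β then φ β else 0)) τ
        = if β = m.μ τ then (if IsEdge m x β then (1 : ZMod 2) else 0) else 0 := by
    intro β _
    by_cases hedge : IsEdge m x β
    · rw [if_pos hedge]
      have hβK := hMK hedge.2.1
      have hcardβ : τ.card + 1 = β.card := by
        rw [card_eq_of_rel (show rel m β x from hedge)]; exact hcard
      rw [ih β hedge hβK τ hτM hτcov hcardβ]
      by_cases hb : β = m.μ τ
      · rw [if_pos hb, if_pos hb.symm, if_pos hedge]
      · rw [if_neg hb, if_neg (fun h => hb h.symm)]
    · rw [if_neg hedge, map_zero, Finsupp.zero_apply, if_neg hedge]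
      rw [if_congr Iff.rfl rfl rfl]
      split <;> rfl
  rw [Finset.sum_congr rfl hterm, Finset.sum_ite_eq' Finset.univ (m.μ τ)
    (fun β => if IsEdge m x β then (1 : ZMod 2) else 0), if_pos (Finset.mem_univ _)]
  have hμM : m.μ τ ∈ m.M := m.mem_M τ hτM
  have hinv : m.μ (m.μ τ) = τ := m.invol τ hτM
  have hEdgeIff : IsEdge m x (m.μ τ) ↔ (τ ⊆ x ∧ m.μ τ ≠ x) := by
    constructor
    · rintro ⟨hne, -, -, hcov⟩
      rw [hinv] at hcov
      exact ⟨hcov.1, hne⟩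
    · rintro ⟨hsub, hne⟩
      exact ⟨hne, hμM, by rw [hinv]; exact hτcov, by rw [hinv]; exact ⟨hsub, hcard.symm⟩⟩
  by_cases hμ : m.μ τ = x
  · have hsub : τ ⊆ x := hμ ▸ hτcov.1
    rw [if_pos hμ, if_pos hsub, if_neg (fun h => (hEdgeIff.1 h).2 hμ), add_zero]
  · rw [if_neg hμ]
    by_cases hsub : τ ⊆ x
    · rw [if_pos hsub, if_pos (hEdgeIff.2 ⟨hsub, hμ⟩)]
      decide
    · rw [if_neg hsub, if_neg (fun h => hsub (hEdgeIff.1 h).1), add_zero]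

end ClaimA
section Span
variable {V : Type*} [Fintype V] [DecidableEq V] {K : Set (Finset V)}
  {m : PartialMatching V} {φ : Finset V → Ch V}

lemma linearCombination_apply_coeff (ψ : Finset V → Ch V) (l : Finset V →₀ ZMod 2)
    (τ : Finset V) :
    (Finsupp.linearCombination (ZMod 2) ψ l) τ = ∑ i ∈ l.support, l i * (ψ i) τ := by
  rw [Finsupp.linearCombination_apply, Finsupp.sum, Finsupp.finset_sum_apply]
  exact Finset.sum_congr rfl fun i _ => by rw [Finsupp.smul_apply, smul_eq_mul]

lemma bdry_chainCard (hK : IsComplex K) (k : ℕ) :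
    Submodule.map (bdry V) (chainCard K (k + 1)) ≤ chainCard K k := by
  rw [chainCard, Submodule.map_span, Submodule.span_le]
  rintro f ⟨g, ⟨σ, hσ, hc, rfl⟩, rfl⟩
  simp only [SetLike.mem_coe]
  rw [bdry_single]
  split
  · exact Submodule.zero_mem _
  · rename_i hcard
    push_neg at hcard
    apply Submodule.sum_mem
    intro v hv
    apply Submodule.subset_span
    refine ⟨σ.erase v, (hK σ hσ).2 _ (Finset.erase_subset v σ) ?_, ?_, rfl⟩
    · rw [← Finset.card_pos, Finset.card_erase_of_mem hv]; omega
    · rw [Finset.card_erase_of_mem hv, hc]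
      omega

lemma chainCard_le_span_phi (hac : m.Acyclic) (hMK : m.M ⊆ K) (hφ : IsClosure K m φ)
    (k : ℕ) :
    chainCard K k ≤ Submodule.span (ZMod 2) (φ '' {δ | δ ∈ K ∧ δ.card = k}) := by
  classical
  rw [chainCard, Submodule.span_le]
  rintro f ⟨σ, hσ, hc, rfl⟩
  simp only [SetLike.mem_coe]
  have hrw : Finsupp.single σ (1 : ZMod 2)
      = φ σ + ∑ β : Finset V, if IsEdge m σ β then φ β else 0 := by
    rw [hφ σ hσ, add_assoc, ch_add_self, add_zero]
  rw [hrw]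
  refine Submodule.add_mem _ (Submodule.subset_span ⟨σ, ⟨hσ, hc⟩, rfl⟩)
    (Submodule.sum_mem _ fun β _ => ?_)
  by_cases hedge : IsEdge m σ β
  · rw [if_pos hedge]
    exact Submodule.subset_span ⟨β, ⟨hMK hedge.2.1,
      (card_eq_of_rel (show rel m β σ from hedge)).trans hc⟩, rfl⟩
  · rw [if_neg hedge]; exact Submodule.zero_mem _

lemma critWOn_eq_span_image (C : Set (Finset V)) (k : ℕ) :
    critWOn C m φ k
      = Submodule.span (ZMod 2) (φ '' {γ | γ ∈ C ∧ γ.card = k ∧ γ ∉ m.M}) := by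
  rw [critWOn]
  congr 1
  ext f
  constructor
  · rintro ⟨γ, h1, h2, h3, rfl⟩; exact ⟨γ, ⟨h1, h2, h3⟩, rfl⟩
  · rintro ⟨γ, ⟨h1, h2, h3⟩, rfl⟩; exact ⟨γ, h1, h2, h3, rfl⟩

/-- **Key subcomplex property**: the boundary of the closure of a critical simplex is a
sum of closures of critical simplices. -/
lemma bdry_phi_mem_crit (hK : IsComplex K) (hac : m.Acyclic) (hMK : m.M ⊆ K)
    (hφ : IsClosure K m φ) {γ : Finset V} {k : ℕ}
    (hγ : γ ∈ K) (hγM : γ ∉ m.M) (hc : γ.card = k + 1) :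
    bdry V (φ γ) ∈ critWOn K m φ k := by
  have hx : bdry V (φ γ) ∈ Submodule.span (ZMod 2) (φ '' {δ | δ ∈ K ∧ δ.card = k}) :=
    chainCard_le_span_phi hac hMK hφ k
      (bdry_chainCard hK k ⟨φ γ, phi_mem_chainCard hac hMK hφ hγ hc, rfl⟩)
  rw [Finsupp.mem_span_image_iff_linearCombination] at hx
  obtain ⟨l, hl, hlx⟩ := hx
  rw [Finsupp.mem_supported] at hl
  have hsupport : ∀ δ ∈ l.support, δ ∈ K ∧ δ.card = k := fun δ h => hl h
  have hnotM : ∀ δ ∈ l.support, δ ∉ m.M := by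
    intro δ hδs hδM
    obtain ⟨hδK, hδc⟩ := hsupport δ hδs
    have hδne : l δ ≠ 0 := Finsupp.mem_support_iff.1 hδs
    rcases m.matched δ hδM with hdown | hup
    · -- δ is down-matched: use the coefficient of `bdry (φ γ)` at δ
      have h1 : (bdry V (φ γ)) δ = l δ := by
        rw [← hlx, linearCombination_apply_coeff]
        rw [Finset.sum_eq_single δ]
        · rw [phi_self hac hMK hφ hδK, mul_one]
        · intro δ' hδ's hne
          rw [phi_apply_of_not_mup hac hMK hφ (hsupport δ' hδ's).1
            (not_mup_of_mdown hδM hdown) (fun h => hne h.symm), mul_zero]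
        · intro h; exact absurd hδs h
      have h2 : (bdry V (φ γ)) δ = 0 := by
        rw [claimA hK hac hMK hφ γ hγ δ hδM hdown (by omega)]
        rw [if_neg (fun h => hγM (by rw [← h]; exact m.mem_M δ hδM))]
      rw [h1] at h2
      exact hδne h2
    · -- δ is up-matched: use the coefficient of `bdry (bdry (φ γ)) = 0` at `μ δ`
      set τ₀ := m.μ δ with hτ₀
      have hτ₀M : τ₀ ∈ m.M := m.mem_M δ hδM
      have hτ₀inv : m.μ τ₀ = δ := m.invol δ hδM
      have hτ₀cov : Covers (m.μ τ₀) τ₀ := by rw [hτ₀inv]; exact hup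
      have hτ₀c : τ₀.card + 1 = δ.card := hup.2.symm
      have hδpos : 1 ≤ δ.card := Finset.card_pos.2 (hK δ (hMK hδM)).1
      have h0 : (bdry V (bdry V (φ γ))) τ₀ = 0 := by rw [bdry_bdry]; rfl
      rw [← hlx, Finsupp.linearCombination_apply, map_finsuppSum] at h0
      have hrw : (l.sum fun i a => bdry V (a • φ i)) τ₀
          = ∑ i ∈ l.support, l i * (bdry V (φ i)) τ₀ := by
        rw [Finsupp.sum, Finsupp.finset_sum_apply]
        exact Finset.sum_congr rfl fun i _ => by
          rw [map_smul, Finsupp.smul_apply, smul_eq_mul]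
      rw [hrw] at h0
      have hterm : ∀ i ∈ l.support, l i * (bdry V (φ i)) τ₀
          = if δ = i then l i else 0 := by
        intro i his
        obtain ⟨hiK, hic⟩ := hsupport i his
        rw [claimA hK hac hMK hφ i hiK τ₀ hτ₀M hτ₀cov (by omega), hτ₀inv]
        by_cases h : δ = i
        · rw [if_pos h, if_pos h, mul_one]
        · rw [if_neg h, if_neg h, mul_zero]
      rw [Finset.sum_congr rfl hterm, Finset.sum_ite_eq l.support δ (fun i => l i),
        if_pos hδs] at h0
      exact hδne h0
  rw [critWOn_eq_span_image, Finsupp.mem_span_image_iff_linearCombination]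
  refine ⟨l, ?_, hlx⟩
  rw [Finsupp.mem_supported]
  intro δ hδ
  obtain ⟨h1, h2⟩ := hsupport δ hδ
  exact ⟨h1, h2, hnotM δ hδ⟩

lemma bdry_crit_le (hK : IsComplex K) (hac : m.Acyclic) (hMK : m.M ⊆ K)
    (hφ : IsClosure K m φ) (k : ℕ) :
    Submodule.map (bdry V) (critWOn K m φ (k + 1)) ≤ critWOn K m φ k := by
  rw [critWOn, Submodule.map_span, Submodule.span_le]
  rintro f ⟨g, ⟨γ, h1, h2, h3, rfl⟩, rfl⟩
  exact bdry_phi_mem_crit hK hac hMK hφ h1 h3 h2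

end Span
section MatchW
variable {V : Type*} [Fintype V] [DecidableEq V] {K : Set (Finset V)}
  {m : PartialMatching V} {φ : Finset V → Ch V}

lemma bdry_linearCombination_coeff (ψ : Finset V → Ch V) (l : Finset V →₀ ZMod 2)
    (τ : Finset V) :
    (bdry V (Finsupp.linearCombination (ZMod 2) ψ l)) τ
      = ∑ i ∈ l.support, l i * (bdry V (ψ i)) τ := by
  rw [Finsupp.linearCombination_apply, map_finsuppSum, Finsupp.sum, Finsupp.finset_sum_apply]
  exact Finset.sum_congr rfl fun i _ => by rw [map_smul, Finsupp.smul_apply, smul_eq_mul]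

lemma mup_nonempty (hK : IsComplex K) (hMK : m.M ⊆ K) {σ : Finset V} (h : σ ∈ Mup m) :
    (m.μ σ).Nonempty ∧ σ.card = (m.μ σ).card + 1 :=
  ⟨(hK _ (hMK (m.mem_M σ h.1))).1, h.2.2⟩

/-- Triangularity: the coefficient at `μ β₀` of a combination of boundaries of
up-matched simplices, for `β₀` maximal, is the coefficient of `β₀`. -/
lemma triangular (hK : IsComplex K) (hMK : m.M ⊆ K)
    (l : Finset V →₀ ZMod 2) (hl : ∀ β ∈ l.support, β ∈ Mup m)
    {β₀ : Finset V} (hβ₀ : β₀ ∈ l.support)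
    (hcard : ∀ β ∈ l.support, β.card = β₀.card)
    (hmax : ∀ β ∈ l.support, ¬ Relation.TransGen (rel m) β₀ β) :
    ∑ β ∈ l.support, l β * (bdry V (Finsupp.single β 1)) (m.μ β₀) = l β₀ := by
  obtain ⟨hτne, hτc⟩ := mup_nonempty hK hMK (hl β₀ hβ₀)
  rw [Finset.sum_eq_single β₀]
  · rw [bdry_single_apply hτne hτc, if_pos (hl β₀ hβ₀).2.1, mul_one]
  · intro β hβs hne
    have hβc : β.card = (m.μ β₀).card + 1 := by rw [hcard β hβs]; exact hτc
    rw [bdry_single_apply hτne hβc]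
    by_cases hsub : m.μ β₀ ⊆ β
    · exfalso
      apply hmax β hβs
      exact Relation.TransGen.single
        ⟨hne.symm ∘ Eq.symm ∘ Eq.symm, (hl β₀ hβ₀).1, (hl β₀ hβ₀).2, hsub, hβc⟩
    · rw [if_neg hsub, mul_zero]
  · intro h; exact absurd hβ₀ h

lemma matchW_eq (k : ℕ) :
    matchW m k = Submodule.span (ZMod 2) {f : Ch V | ∃ σ ∈ MupCard m k,
        f = Finsupp.single σ 1}
      ⊔ Submodule.span (ZMod 2) {f | ∃ β ∈ MupCard m (k + 1),
        f = bdry V (Finsupp.single β 1)} := by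
  rw [matchW, Submodule.span_union]

lemma bdry_match_le (k : ℕ) :
    Submodule.map (bdry V) (matchW m (k + 1)) ≤ matchW m k := by
  rw [matchW, Submodule.map_span, Submodule.span_le]
  rintro f ⟨g, hg, rfl⟩
  rcases hg with ⟨σ, hσ, rfl⟩ | ⟨β, hβ, rfl⟩
  · exact Submodule.subset_span (Or.inr ⟨σ, hσ, rfl⟩)
  · rw [bdry_bdry]
    exact Submodule.zero_mem _

lemma matchW_le_chainCard (hK : IsComplex K) (hMK : m.M ⊆ K) (k : ℕ) :
    matchW m k ≤ chainCard K k := by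
  rw [matchW, Submodule.span_le]
  rintro f (⟨σ, hσ, rfl⟩ | ⟨β, hβ, rfl⟩)
  · exact Submodule.subset_span ⟨σ, hMK hσ.1.1, hσ.2, rfl⟩
  · exact bdry_chainCard hK k
      ⟨Finsupp.single β 1, Submodule.subset_span ⟨β, hMK hβ.1.1, hβ.2, rfl⟩, rfl⟩

/-- Cycles in the Match complex are boundaries from the Match complex. -/
lemma match_cycle_bdry (hK : IsComplex K) (hMK : m.M ⊆ K) (hac : m.Acyclic) {k : ℕ}
    {x : Ch V} (hx : x ∈ matchW m k) (hbx : bdry V x = 0) :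
    x ∈ Submodule.map (bdry V) (matchW m (k + 1)) := by
  rw [matchW_eq] at hx
  obtain ⟨x1, hx1, x2, hx2, rfl⟩ := Submodule.mem_sup.1 hx
  have hx2B : x2 ∈ Submodule.map (bdry V) (matchW m (k + 1)) := by
    revert hx2
    have : Submodule.span (ZMod 2) {f : Ch V | ∃ β ∈ MupCard m (k + 1),
        f = bdry V (Finsupp.single β 1)} ≤ Submodule.map (bdry V) (matchW m (k + 1)) := by
      rw [Submodule.span_le]
      rintro f ⟨β, hβ, rfl⟩
      exact ⟨Finsupp.single β 1, Submodule.subset_span (Or.inl ⟨β, hβ, rfl⟩), rfl⟩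
    exact fun h => this h
  have hbx2 : bdry V x2 = 0 := by
    obtain ⟨y, -, rfl⟩ := hx2B
    exact bdry_bdry y
  have hbx1 : bdry V x1 = 0 := by
    have := congrArg (fun z => z - bdry V x2) (map_add (bdry V) x1 x2 ▸ hbx)
    simp only [hbx2, add_zero, sub_zero, zero_sub] at this
    rw [map_add, hbx2, add_zero] at hbx
    exact hbx
  -- x1 is supported on up-matched simplices; show it is zero
  have hx1span : x1 ∈ Submodule.span (ZMod 2)
      ((fun σ => Finsupp.single σ (1 : ZMod 2)) '' MupCard m k) := by
    convert hx1 using 2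
    ext f
    constructor
    · rintro ⟨σ, hσ, rfl⟩; exact ⟨σ, hσ, rfl⟩
    · rintro ⟨σ, hσ, rfl⟩; exact ⟨σ, hσ, rfl⟩
  rw [Finsupp.mem_span_image_iff_linearCombination] at hx1span
  obtain ⟨l, hl, hlx⟩ := hx1span
  rw [Finsupp.mem_supported] at hl
  have hx1zero : x1 = 0 := by
    rcases eq_or_ne l 0 with h0 | hne
    · rw [← hlx, h0, map_zero]
    · exfalso
      have hsne : l.support.Nonempty := Finsupp.support_nonempty_iff.2 hne
      obtain ⟨β₀, hβ₀, hmax⟩ := exists_maximal hac hsne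
      have hl' : ∀ β ∈ l.support, β ∈ Mup m := fun β h => (hl h).1
      have hcard : ∀ β ∈ l.support, β.card = β₀.card := fun β h => by
        rw [(hl h).2, (hl hβ₀).2]
      have := triangular hK hMK l hl' hβ₀ hcard hmax
      rw [← bdry_linearCombination_coeff (fun σ => Finsupp.single σ 1) l (m.μ β₀), hlx,
        hbx1] at this
      exact Finsupp.mem_support_iff.1 hβ₀ this.symm
  rw [hx1zero, zero_add]
  exact hx2B

end MatchW
section Decomp
variable {V : Type*} [Fintype V] [DecidableEq V] {K : Set (Finset V)}
  {m : PartialMatching V} {φ : Finset V → Ch V}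

lemma crit_le_chainCard (hac : m.Acyclic) (hMK : m.M ⊆ K) (hφ : IsClosure K m φ) (k : ℕ) :
    critWOn K m φ k ≤ chainCard K k := by
  rw [critWOn, Submodule.span_le]
  rintro f ⟨γ, h1, h2, h3, rfl⟩
  exact phi_mem_chainCard hac hMK hφ h1 h2

lemma phi_mup_mem_matchW (hac : m.Acyclic) (hMK : m.M ⊆ K) (hφ : IsClosure K m φ)
    {β : Finset V} {k : ℕ} (hβ : β ∈ Mup m) (hc : β.card = k) : φ β ∈ matchW m k := by
  have hmem : φ β ∈ Finsupp.supported (ZMod 2) (ZMod 2) (MupCard m k) := by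
    rw [Finsupp.mem_supported]
    intro δ hδ
    have hδne := Finsupp.mem_support_iff.1 hδ
    rcases phi_supp hac hMK hφ β (hMK hβ.1) δ hδne with h | ⟨h1, h2⟩
    · exact ⟨h ▸ hβ, h ▸ hc⟩
    · exact ⟨h1, (card_eq_of_transGen h2).trans hc⟩
  rw [← span_single_eq] at hmem
  rw [matchW]
  exact Submodule.span_mono Set.subset_union_left hmem

lemma single_crit (hac : m.Acyclic) (hMK : m.M ⊆ K) (hφ : IsClosure K m φ)
    {δ : Finset V} {k : ℕ} (hδK : δ ∈ K) (hδM : δ ∉ m.M) (hc : δ.card = k) :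
    Finsupp.single δ (1 : ZMod 2) ∈ critWOn K m φ k ⊔ matchW m k := by
  classical
  have hrw : Finsupp.single δ (1 : ZMod 2)
      = φ δ + ∑ β : Finset V, if IsEdge m δ β then φ β else 0 := by
    rw [hφ δ hδK, add_assoc, ch_add_self, add_zero]
  rw [hrw]
  apply Submodule.add_mem
  · exact Submodule.mem_sup_left (Submodule.subset_span ⟨δ, hδK, hc, hδM, rfl⟩)
  · refine Submodule.sum_mem _ fun β _ => ?_
    by_cases hedge : IsEdge m δ β
    · rw [if_pos hedge]
      exact Submodule.mem_sup_right (phi_mup_mem_matchW hac hMK hφ ⟨hedge.2.1, hedge.2.2.1⟩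
        ((card_eq_of_rel (show rel m β δ from hedge)).trans hc))
    · rw [if_neg hedge]
      exact Submodule.zero_mem _

lemma single_mdown (hK : IsComplex K) (hac : m.Acyclic) (hMK : m.M ⊆ K)
    (hφ : IsClosure K m φ) :
    ∀ β, β ∈ Mup m → ∀ k, β.card = k + 1 →
      Finsupp.single (m.μ β) (1 : ZMod 2) ∈ critWOn K m φ k ⊔ matchW m k := by
  intro β
  refine (wf_rel hac).induction
    (C := fun β => β ∈ Mup m → ∀ k, β.card = k + 1 →
      Finsupp.single (m.μ β) (1 : ZMod 2) ∈ critWOn K m φ k ⊔ matchW m k) β ?_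
  intro β ih hβup k hβc
  have hβK : β ∈ K := hMK hβup.1
  set δ := m.μ β with hδdef
  have hδK : δ ∈ K := hMK (m.mem_M β hβup.1)
  have hδc : δ.card = k := by
    have h := hβup.2.2
    rw [← hδdef] at h
    omega
  have hδne : δ.Nonempty := (hK δ hδK).1
  have hk1 : 1 ≤ k := by rw [← hδc]; exact Finset.card_pos.2 hδne
  have hsub : δ ⊆ β := hβup.2.1
  -- the vertex of β not in δ
  have hcard1 : (β \ δ).card = 1 := by
    rw [Finset.card_sdiff_of_subset hsub]; omega
  obtain ⟨v₀, hv₀⟩ := Finset.card_eq_one.1 hcard1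
  have hv₀β : v₀ ∈ β := by
    have : v₀ ∈ β \ δ := hv₀ ▸ Finset.mem_singleton_self v₀
    exact (Finset.mem_sdiff.1 this).1
  have hv₀δ : v₀ ∉ δ := by
    have : v₀ ∈ β \ δ := hv₀ ▸ Finset.mem_singleton_self v₀
    exact (Finset.mem_sdiff.1 this).2
  have herase : β.erase v₀ = δ := by
    refine (Finset.eq_of_subset_of_card_le (fun w hw => ?_) ?_).symm
    · exact Finset.mem_erase.2 ⟨fun h => hv₀δ (h ▸ hw), hsub hw⟩
    · rw [Finset.card_erase_of_mem hv₀β]; omega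
  have hbsingle : bdry V (Finsupp.single β (1 : ZMod 2))
      = Finsupp.single δ 1 + ∑ v ∈ β.erase v₀, Finsupp.single (β.erase v) 1 := by
    rw [bdry_single, if_neg (by omega)]
    rw [← Finset.add_sum_erase β _ hv₀β, herase]
  have hrw : Finsupp.single δ (1 : ZMod 2)
      = bdry V (Finsupp.single β (1 : ZMod 2))
        + ∑ v ∈ β.erase v₀, Finsupp.single (β.erase v) 1 := by
    rw [hbsingle, add_assoc, ch_add_self, add_zero]
  rw [hrw]
  apply Submodule.add_mem
  · exact Submodule.mem_sup_right (Submodule.subset_span (Or.inr ⟨β, ⟨hβup, hβc⟩, rfl⟩))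
  refine Submodule.sum_mem _ fun v hv => ?_
  have hvβ : v ∈ β := Finset.mem_of_mem_erase hv
  have hvv₀ : v ≠ v₀ := Finset.ne_of_mem_erase hv
  set τ' := β.erase v with hτ'def
  have hτ'K : τ' ∈ K := (hK β hβK).2 _ (Finset.erase_subset v β)
    (by rw [← Finset.card_pos, Finset.card_erase_of_mem hvβ]; omega)
  have hτ'c : τ'.card = k := by rw [hτ'def, Finset.card_erase_of_mem hvβ]; omega
  have hτ'ne : τ' ≠ δ := by
    intro h
    apply hv₀δ
    rw [← h, hτ'def]
    exact Finset.mem_erase.2 ⟨fun hc' => hvv₀ hc'.symm, hv₀β⟩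
  by_cases hτ'M : τ' ∈ m.M
  · rcases m.matched τ' hτ'M with hdown | hup'
    · -- τ' is down-matched: recurse on its partner
      set β' := m.μ τ' with hβ'def
      have hβ'M : β' ∈ m.M := m.mem_M τ' hτ'M
      have hβ'inv : m.μ β' = τ' := m.invol τ' hτ'M
      have hβ'up : β' ∈ Mup m := ⟨hβ'M, by rw [hβ'inv]; exact hdown⟩
      have hβ'c : β'.card = k + 1 := by have := hdown.2; omega
      have hβ'ne : β' ≠ β := by
        intro h
        apply hτ'ne
        rw [← hβ'inv, h, ← hδdef]
      have hrel : rel m β' β :=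
        ⟨hβ'ne, hβ'M, ⟨by rw [hβ'inv]; exact hdown.1, by rw [hβ'inv]; omega⟩,
          ⟨by rw [hβ'inv]; exact Finset.erase_subset v β, by rw [hβ'inv]; omega⟩⟩
      have := ih β' hrel hβ'up k hβ'c
      rw [hβ'inv] at this
      exact this
    · -- τ' is up-matched
      exact Submodule.mem_sup_right
        (Submodule.subset_span (Or.inl ⟨τ', ⟨⟨hτ'M, hup'⟩, hτ'c⟩, rfl⟩))
  · exact single_crit hac hMK hφ hτ'K hτ'M hτ'c

/-- The decomposition `C_k = Crit_k + Match_k`. -/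
lemma chainCard_eq_sup (hK : IsComplex K) (hac : m.Acyclic) (hMK : m.M ⊆ K)
    (hφ : IsClosure K m φ) (k : ℕ) :
    chainCard K k = critWOn K m φ k ⊔ matchW m k := by
  apply le_antisymm
  · rw [chainCard, Submodule.span_le]
    rintro f ⟨δ, hδK, hδc, rfl⟩
    simp only [SetLike.mem_coe]
    by_cases hδM : δ ∈ m.M
    · rcases m.matched δ hδM with hdown | hup
      · -- down-matched
        have hβup : m.μ δ ∈ Mup m := ⟨m.mem_M δ hδM, by rw [m.invol δ hδM]; exact hdown⟩
        have hβc : (m.μ δ).card = k + 1 := by have := hdown.2; omega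
        have := single_mdown hK hac hMK hφ (m.μ δ) hβup k hβc
        rw [m.invol δ hδM] at this
        exact this
      · exact Submodule.mem_sup_right
          (Submodule.subset_span (Or.inl ⟨δ, ⟨⟨hδM, hup⟩, hδc⟩, rfl⟩))
    · exact single_crit hac hMK hφ hδK hδM hδc
  · exact sup_le (crit_le_chainCard hac hMK hφ k) (matchW_le_chainCard hK hMK k)

/-- The decomposition is direct: `Crit_k ∩ Match_k = 0`. -/
lemma crit_inf_match (hK : IsComplex K) (hac : m.Acyclic) (hMK : m.M ⊆ K)
    (hφ : IsClosure K m φ) (k : ℕ) {x : Ch V}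
    (hxc : x ∈ critWOn K m φ k) (hxm : x ∈ matchW m k) : x = 0 := by
  rw [critWOn_eq_span_image, Finsupp.mem_span_image_iff_linearCombination] at hxc
  obtain ⟨lc, hlc, hlcx⟩ := hxc
  rw [Finsupp.mem_supported] at hlc
  rw [matchW_eq] at hxm
  obtain ⟨x1, hx1, x2, hx2, hxsum⟩ := Submodule.mem_sup.1 hxm
  -- x1 is supported on up-matched simplices
  have hx1span : x1 ∈ Finsupp.supported (ZMod 2) (ZMod 2) (MupCard m k) := by
    rw [← span_single_eq]
    exact hx1
  rw [Finsupp.mem_supported] at hx1span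
  -- x2 as a combination of boundaries
  have hx2span : x2 ∈ Submodule.span (ZMod 2)
      ((fun β => bdry V (Finsupp.single β (1 : ZMod 2))) '' MupCard m (k + 1)) := by
    convert hx2 using 2
    ext f
    constructor
    · rintro ⟨β, hβ, rfl⟩; exact ⟨β, hβ, rfl⟩
    · rintro ⟨β, hβ, rfl⟩; exact ⟨β, hβ, rfl⟩
  rw [Finsupp.mem_span_image_iff_linearCombination] at hx2span
  obtain ⟨l2, hl2, hl2x⟩ := hx2span
  rw [Finsupp.mem_supported] at hl2
  -- first: l2 = 0
  have hl2zero : l2 = 0 := by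
    by_contra hne
    have hsne : l2.support.Nonempty := Finsupp.support_nonempty_iff.2 hne
    obtain ⟨β₀, hβ₀, hmax⟩ := exists_maximal hac hsne
    have hl2' : ∀ β ∈ l2.support, β ∈ Mup m := fun β h => (hl2 h).1
    have hcard : ∀ β ∈ l2.support, β.card = β₀.card := fun β h => by
      rw [(hl2 h).2, (hl2 hβ₀).2]
    have htri := triangular hK hMK l2 hl2' hβ₀ hcard hmax
    -- the coefficient of x2 at μ β₀ equals l2 β₀
    have hx2coeff : x2 (m.μ β₀) = l2 β₀ := by
      rw [← hl2x, linearCombination_apply_coeff]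
      exact htri
    -- μ β₀ is down-matched, hence not in Mup and not critical
    have hβ₀up : β₀ ∈ Mup m := hl2' β₀ hβ₀
    set τ₀ := m.μ β₀ with hτ₀def
    have hτ₀M : τ₀ ∈ m.M := m.mem_M β₀ hβ₀up.1
    have hτ₀inv : m.μ τ₀ = β₀ := m.invol β₀ hβ₀up.1
    have hτ₀notup : τ₀ ∉ Mup m := not_mup_of_mdown hτ₀M (by rw [hτ₀inv]; exact hβ₀up.2)
    -- coefficient of x at τ₀ from Crit side is 0
    have hxcoeff : x τ₀ = 0 := by
      rw [← hlcx, linearCombination_apply_coeff]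
      apply Finset.sum_eq_zero
      intro γ hγ
      obtain ⟨hγK, -, hγM⟩ := hlc hγ
      rw [phi_apply_of_not_mup hac hMK hφ hγK hτ₀notup (fun h => hγM (h ▸ hτ₀M)), mul_zero]
    -- coefficient of x1 at τ₀ is 0
    have hx1coeff : x1 τ₀ = 0 := by
      by_contra hc
      exact hτ₀notup (hx1span (Finsupp.mem_support_iff.2 hc)).1
    have : x τ₀ = x1 τ₀ + x2 τ₀ := by rw [← hxsum]; rfl
    rw [hxcoeff, hx1coeff, hx2coeff, zero_add] at this
    exact Finsupp.mem_support_iff.1 hβ₀ this.symm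
  have hx2zero : x2 = 0 := by rw [← hl2x, hl2zero, map_zero]
  -- now: lc = 0
  have hlczero : lc = 0 := by
    ext γ
    rw [Finsupp.zero_apply]
    by_contra hne
    have hγs : γ ∈ lc.support := Finsupp.mem_support_iff.2 hne
    obtain ⟨hγK, hγc, hγM⟩ := hlc hγs
    have hγnotup : γ ∉ Mup m := fun h => hγM h.1
    -- coefficient of x at γ
    have h1 : x γ = lc γ := by
      rw [← hlcx, linearCombination_apply_coeff, Finset.sum_eq_single γ]
      · rw [phi_self hac hMK hφ hγK, mul_one]
      · intro γ' hγ's hne'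
        obtain ⟨hγ'K, -, -⟩ := hlc hγ's
        rw [phi_apply_of_not_mup hac hMK hφ hγ'K hγnotup (fun h => hne' h.symm), mul_zero]
      · intro h; exact absurd hγs h
    have h2 : x γ = x1 γ := by rw [← hxsum, hx2zero, add_zero]
    have h3 : x1 γ = 0 := by
      by_contra hc
      exact hγnotup (hx1span (Finsupp.mem_support_iff.2 hc)).1
    rw [h2, h3] at h1
    exact hne h1.symm
  rw [← hlcx, hlczero, map_zero]

end Decomp
/-- For a finite simplicial complex `K` with an acyclic partial matching
`μ`, the homology of `K` is isomorphic to the homology of the critical (Morse) complex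
`Crit_*(K, μ)` in every degree `q ≥ 0`. -/
theorem homology_iso_crit {V : Type*} [Fintype V] [DecidableEq V]
    (K : Set (Finset V)) (hK : IsComplex K)
    (m : PartialMatching V) (hMK : m.M ⊆ K) (hac : m.Acyclic)
    (φ : Finset V → Ch V) (hφ : IsClosure K m φ) :
    ∀ q : ℕ,
      Nonempty (homolOf (chainCard K) (q + 1) ≃ₗ[ZMod 2]
        homolOf (critWOn K m φ) (q + 1)) := by
  intro q
  have hle : ∀ j, critWOn K m φ j ≤ chainCard K j := crit_le_chainCard hac hMK hφ
  set k := q + 1 with hk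
  set F := homolMap (critWOn K m φ) (chainCard K) hle k with hF
  have hinj : ∀ x : homolOf (critWOn K m φ) k, F x = 0 → x = 0 := by
    intro x hx
    obtain ⟨z, rfl⟩ := Submodule.Quotient.mk_surjective _ x
    rw [hF, homolMap, Submodule.mapQ_apply, Submodule.Quotient.mk_eq_zero,
      Submodule.mem_comap, Submodule.subtype_apply] at hx
    have hzB : ((Submodule.inclusion (inf_le_inf (hle k) le_rfl) z : _) : Ch V)
        ∈ bdriesOf (chainCard K) k := hx
    change (z : Ch V) ∈ bdriesOf (chainCard K) k at hzB
    have hzcrit : (z : Ch V) ∈ critWOn K m φ k := z.2.1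
    -- z = ∂ y with y ∈ C_{k+1} = Crit_{k+1} ⊔ Match_{k+1}
    obtain ⟨y, hy, hyz⟩ := hzB
    rw [chainCard_eq_sup hK hac hMK hφ (k + 1)] at hy
    obtain ⟨u, hu, v, hv, rfl⟩ := Submodule.mem_sup.1 hy
    have hbu : bdry V u ∈ critWOn K m φ k := bdry_crit_le hK hac hMK hφ k ⟨u, hu, rfl⟩
    have hbv : bdry V v ∈ matchW m k := bdry_match_le k ⟨v, hv, rfl⟩
    have hbvcrit : bdry V v ∈ critWOn K m φ k := by
      have : bdry V v = (z : Ch V) - bdry V u := by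
        rw [← hyz, map_add]; abel
      rw [this]
      exact Submodule.sub_mem _ hzcrit hbu
    have hbv0 : bdry V v = 0 := crit_inf_match hK hac hMK hφ k hbvcrit hbv
    have hzu : (z : Ch V) = bdry V u := by
      rw [← hyz, map_add, hbv0, add_zero]
    rw [Submodule.Quotient.mk_eq_zero, Submodule.mem_comap, Submodule.subtype_apply]
    exact ⟨u, hu, hzu.symm⟩
  have hsurj : Function.Surjective F := by
    intro x
    obtain ⟨z, rfl⟩ := Submodule.Quotient.mk_surjective _ x
    have hz1 : (z : Ch V) ∈ chainCard K k := z.2.1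
    have hz2 : bdry V (z : Ch V) = 0 := z.2.2
    rw [chainCard_eq_sup hK hac hMK hφ k] at hz1
    obtain ⟨a, ha, b, hb, hab⟩ := Submodule.mem_sup.1 hz1
    have hsum : bdry V a + bdry V b = 0 := by rw [← map_add, hab, hz2]
    have hab' : bdry V a = bdry V b := by
      rw [← add_zero (bdry V a), ← ch_add_self (bdry V b), ← add_assoc, hsum, zero_add]
    have hba : bdry V a ∈ critWOn K m φ q := bdry_crit_le hK hac hMK hφ q ⟨a, ha, rfl⟩
    have hbb : bdry V b ∈ matchW m q := bdry_match_le q ⟨b, hb, rfl⟩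
    have hba0 : bdry V a = 0 := crit_inf_match hK hac hMK hφ q hba (hab' ▸ hbb)
    have hbb0 : bdry V b = 0 := by rw [← hab', hba0]
    have hbB : b ∈ Submodule.map (bdry V) (matchW m (k + 1)) :=
      match_cycle_bdry hK hMK hac hb hbb0
    have hbB' : b ∈ bdriesOf (chainCard K) k :=
      Submodule.map_mono (matchW_le_chainCard hK hMK (k + 1)) hbB
    have haz : a ∈ cyclesOf (critWOn K m φ) k :=
      ⟨ha, LinearMap.mem_ker.2 hba0⟩
    refine ⟨Submodule.Quotient.mk (⟨a, haz⟩ : ↥(cyclesOf (critWOn K m φ) k)), ?_⟩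
    rw [hF, homolMap, Submodule.mapQ_apply, Submodule.Quotient.eq]
    rw [Submodule.mem_comap, Submodule.subtype_apply]
    simp only [AddSubgroupClass.coe_sub, Submodule.coe_inclusion]
    show a - (z : Ch V) ∈ bdriesOf (chainCard K) k
    have : a - (z : Ch V) = b := by
      rw [← hab, sub_add_cancel_left, neg_eq_of_add_eq_zero_left (ch_add_self b)]
    rw [this]
    exact hbB'
  have hbij : Function.Bijective F := ⟨(LinearMap.ker_eq_bot (f := F)).1
    (by rw [eq_bot_iff]; intro x hx; exact hinj x hx), hsurj⟩
  exact ⟨(LinearEquiv.ofBijective F hbij).symm⟩
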